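/- The group 𝒫(C) associated to the Collatz function C is trivial if and only if the Collatz conjecture holds, i.e., if and only if every forward orbit of C contains 1. -/

import Mathlib

/-- The Collatz function on the positive integers. -/
def collatz (n : ℕ+) : ℕ+ :=
  if h : Odd (n : ℕ) then 3 * n + 1
  else ⟨(n : ℕ) / 2, by
    have h2 : Even (n : ℕ) := Nat.not_odd_iff_even.mp h
    obtain ⟨r, hr⟩ := h2
    have := n.pos
    omega⟩

/-- The relators of the presentation `𝒫(f)`: for each `i ∈ ℕ+`, the word
`a_{f(i)}⁻¹ a_i a_{f(i)} a_i⁻²` in the free group on `ℕ+`. -/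
def Prels (f : ℕ+ → ℕ+) : Set (FreeGroup ℕ+) :=
  {r | ∃ i : ℕ+, r =
    (FreeGroup.of (f i))⁻¹ * FreeGroup.of i * FreeGroup.of (f i) * (FreeGroup.of i ^ 2)⁻¹}


theorem higman3 {G : Type*} [Group G] {a b c : G} (h1 : b⁻¹ * a * b = a * a)
    (h2 : c⁻¹ * b * c = b * b) (h3 : a⁻¹ * c * a = c * c) :
    a = 1 ∧ b = 1 ∧ c = 1 := by
  have R0 : ∀ w : G, a * (a⁻¹ * (w)) = w := fun w => mul_inv_cancel_left a w
  have R1 : ∀ w : G, a⁻¹ * (a * (w)) = w := fun w => inv_mul_cancel_left a w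
  have R2 : ∀ w : G, b * (b⁻¹ * (w)) = w := fun w => mul_inv_cancel_left b w
  have R3 : ∀ w : G, b⁻¹ * (b * (w)) = w := fun w => inv_mul_cancel_left b w
  have R4 : ∀ w : G, c * (c⁻¹ * (w)) = w := fun w => mul_inv_cancel_left c w
  have R5 : ∀ w : G, c⁻¹ * (c * (w)) = w := fun w => inv_mul_cancel_left c w
  have R6 : ∀ w : G, b⁻¹ * (a * (b * (w))) = a * (a * (w)) := fun w => by
    have := congrArg (· * w) h1; simpa only [mul_assoc] using this
  have R7 : ∀ w : G, c⁻¹ * (b * (c * (w))) = b * (b * (w)) := fun w => by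
    have := congrArg (· * w) h2; simpa only [mul_assoc] using this
  have R8 : ∀ w : G, a⁻¹ * (c * (a * (w))) = c * (c * (w)) := fun w => by
    have := congrArg (· * w) h3; simpa only [mul_assoc] using this
  have R9 : ∀ w : G, c * (c * (a⁻¹ * (w))) = a⁻¹ * (c * (w)) := fun w => by
    conv_lhs => rw [← R8 (a⁻¹ * (w))]; rw [R0 (w)]
  have R10 : ∀ w : G, a * (a * (b⁻¹ * (w))) = b⁻¹ * (a * (w)) := fun w => by
    conv_lhs => rw [← R6 (b⁻¹ * (w))]; rw [R2 (w)]
  have R11 : ∀ w : G, a⁻¹ * (b⁻¹ * (a * (w))) = a * (b⁻¹ * (w)) := fun w => by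
    conv_lhs => rw [← R10 (w)]; rw [R1 (a * (b⁻¹ * (w)))]
  have R12 : ∀ w : G, a * (b⁻¹ * (a⁻¹ * (w))) = a⁻¹ * (b⁻¹ * (w)) := fun w => by
    conv_lhs => rw [← R11 (a⁻¹ * (w))]; rw [R0 (w)]
  have R13 : ∀ w : G, a⁻¹ * (a⁻¹ * (b⁻¹ * (w))) = b⁻¹ * (a⁻¹ * (w)) := fun w => by
    conv_lhs => rw [← R12 (w)]; rw [R1 (b⁻¹ * (a⁻¹ * (w)))]
  have R14 : ∀ w : G, b⁻¹ * (a⁻¹ * (b * (w))) = a⁻¹ * (a⁻¹ * (w)) := fun w => by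
    conv_lhs => rw [← R13 (b * (w))]; rw [R3 (w)]
  have R15 : ∀ w : G, b * (b * (c⁻¹ * (w))) = c⁻¹ * (b * (w)) := fun w => by
    conv_lhs => rw [← R7 (c⁻¹ * (w))]; rw [R4 (w)]
  have R16 : ∀ w : G, b⁻¹ * (c⁻¹ * (b * (w))) = b * (c⁻¹ * (w)) := fun w => by
    conv_lhs => rw [← R15 (w)]; rw [R3 (b * (c⁻¹ * (w)))]
  have R17 : ∀ w : G, b * (c⁻¹ * (b⁻¹ * (w))) = b⁻¹ * (c⁻¹ * (w)) := fun w => by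
    conv_lhs => rw [← R16 (b⁻¹ * (w))]; rw [R2 (w)]
  have R18 : ∀ w : G, b⁻¹ * (b⁻¹ * (c⁻¹ * (w))) = c⁻¹ * (b⁻¹ * (w)) := fun w => by
    conv_lhs => rw [← R17 (w)]; rw [R3 (c⁻¹ * (b⁻¹ * (w)))]
  have R19 : ∀ w : G, c⁻¹ * (b⁻¹ * (c * (w))) = b⁻¹ * (b⁻¹ * (w)) := fun w => by
    conv_lhs => rw [← R18 (c * (w))]; rw [R5 (w)]
  have R20 : ∀ w : G, c⁻¹ * (a⁻¹ * (c * (w))) = c * (a⁻¹ * (w)) := fun w => by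
    conv_lhs => rw [← R9 (w)]; rw [R5 (c * (a⁻¹ * (w)))]
  have R21 : ∀ w : G, c * (a⁻¹ * (c⁻¹ * (w))) = c⁻¹ * (a⁻¹ * (w)) := fun w => by
    conv_lhs => rw [← R20 (c⁻¹ * (w))]; rw [R4 (w)]
  have R22 : ∀ w : G, c⁻¹ * (c⁻¹ * (a⁻¹ * (w))) = a⁻¹ * (c⁻¹ * (w)) := fun w => by
    conv_lhs => rw [← R21 (w)]; rw [R5 (a⁻¹ * (c⁻¹ * (w)))]
  have R23 : ∀ w : G, a⁻¹ * (c⁻¹ * (a * (w))) = c⁻¹ * (c⁻¹ * (w)) := fun w => by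
    conv_lhs => rw [← R22 (a * (w))]; rw [R1 (w)]
  have R24 : ∀ w : G, a * (c⁻¹ * (c⁻¹ * (w))) = c⁻¹ * (a * (w)) := fun w => by
    conv_lhs => rw [← R23 (w)]; rw [R0 (c⁻¹ * (a * (w)))]
  have R26 : ∀ w : G, c⁻¹ * (a * (c * (w))) = a * (c⁻¹ * (w)) := fun w => by
    conv_lhs => rw [← R24 (c * (w))]; rw [R5 (w)]
  have R28 : ∀ w : G, b * (a⁻¹ * (a⁻¹ * (w))) = a⁻¹ * (b * (w)) := fun w => by
    conv_lhs => rw [← R14 (w)]; rw [R2 (a⁻¹ * (b * (w)))]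
  have R29 : ∀ w : G, a⁻¹ * (b * (a * (w))) = b * (a⁻¹ * (w)) := fun w => by
    conv_lhs => rw [← R28 (a * (w))]; rw [R1 (w)]
  have R30 : ∀ w : G, a * (b * (a⁻¹ * (w))) = b * (a * (w)) := fun w => by
    conv_lhs => rw [← R29 (w)]; rw [R0 (b * (a * (w)))]
  have R32 : ∀ w : G, c * (b⁻¹ * (b⁻¹ * (w))) = b⁻¹ * (c * (w)) := fun w => by
    conv_lhs => rw [← R19 (w)]; rw [R4 (b⁻¹ * (c * (w)))]
  have R33 : ∀ w : G, b⁻¹ * (c * (b * (w))) = c * (b⁻¹ * (w)) := fun w => by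
    conv_lhs => rw [← R32 (b * (w))]; rw [R3 (w)]
  have R34 : ∀ w : G, b * (c * (b⁻¹ * (w))) = c * (b * (w)) := fun w => by
    conv_lhs => rw [← R33 (w)]; rw [R2 (c * (b * (w)))]
  have R59 : ∀ w : G, c⁻¹ * (b⁻¹ * (a * (c * (w)))) = b⁻¹ * (b⁻¹ * (a * (c⁻¹ * (w)))) := fun w => by
    conv_lhs => rw [← R18 (a * (c * (w)))]; rw [R26 (w)]
  have R66 : ∀ w : G, a * (a * (b * (c⁻¹ * (w)))) = b⁻¹ * (a * (c⁻¹ * (b * (w)))) := fun w => by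
    conv_lhs => rw [← R6 (b * (c⁻¹ * (w)))]; rw [R15 (w)]
  have R67 : ∀ w : G, a * (a * (c * (b⁻¹ * (w)))) = b⁻¹ * (a * (c * (b * (w)))) := fun w => by
    conv_lhs => rw [← R6 (c * (b⁻¹ * (w)))]; rw [R34 (w)]
  have R132 : ∀ w : G, a⁻¹ * (b⁻¹ * (b⁻¹ * (a * (c⁻¹ * (b * (w)))))) = a * (a * (a * (c⁻¹ * (w)))) := fun w => by
    conv_lhs => rw [← R66 (w)]; rw [R11 (a * (b * (c⁻¹ * (w))))]; rw [R6 (c⁻¹ * (w))]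
  have R145 : ∀ w : G, a * (a * (a * (c⁻¹ * (w)))) = c⁻¹ * (a * (c⁻¹ * (b⁻¹ * (w)))) := fun w => by
    conv_lhs => rw [← R132 (w)]; rw [← R59 (b * (w))]; rw [← R67 (w)]; rw [R23 (a * (c * (b⁻¹ * (w))))]; rw [R26 (b⁻¹ * (w))]
  have R146 : ∀ w : G, c⁻¹ * (c⁻¹ * (c⁻¹ * (b⁻¹ * (w)))) = a * (a * (c⁻¹ * (w))) := fun w => by
    conv_lhs => rw [← R23 (c⁻¹ * (b⁻¹ * (w)))]; rw [← R145 (w)]; rw [R1 (a * (a * (c⁻¹ * (w))))]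
  have R148 : ∀ w : G, a * (a * (c⁻¹ * (b * (w)))) = c⁻¹ * (c⁻¹ * (c⁻¹ * (w))) := fun w => by
    conv_lhs => rw [← R146 (b * (w))]; rw [R3 (w)]
  have R149 : ∀ w : G, a⁻¹ * (c⁻¹ * (c⁻¹ * (c⁻¹ * (w)))) = a * (c⁻¹ * (b * (w))) := fun w => by
    conv_lhs => rw [← R148 (w)]; rw [R1 (a * (c⁻¹ * (b * (w))))]
  have R152 : ∀ w : G, a * (b * (b * (w))) = a⁻¹ * (c⁻¹ * (c⁻¹ * (w))) := fun w => by
    conv_lhs => rw [← R7 (w)]; rw [← R149 (c * (w))]; rw [R5 (w)]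
  have R153 : ∀ w : G, a⁻¹ * (a⁻¹ * (c⁻¹ * (c⁻¹ * (w)))) = b * (b * (w)) := fun w => by
    conv_lhs => rw [← R152 (w)]; rw [R1 (b * (b * (w)))]
  have R154 : ∀ w : G, b⁻¹ * (a⁻¹ * (c⁻¹ * (c⁻¹ * (w)))) = a * (a * (b * (w))) := fun w => by
    conv_lhs => rw [← R152 (w)]; rw [R6 (b * (w))]
  have R161 : ∀ w : G, b * (b * (c * (w))) = a⁻¹ * (a⁻¹ * (c⁻¹ * (w))) := fun w => by
    conv_lhs => rw [← R153 (c * (w))]; rw [R5 (w)]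
  have R162 : ∀ w : G, b⁻¹ * (a⁻¹ * (a⁻¹ * (c⁻¹ * (w)))) = b * (c * (w)) := fun w => by
    conv_lhs => rw [← R161 (w)]; rw [R3 (b * (c * (w)))]
  have R188 : ∀ w : G, b * (c * (a * (w))) = a * (a * (b * (w))) := fun w => by
    conv_lhs => rw [← R162 (a * (w))]; rw [R23 (w)]; rw [R154 (w)]
  have R191 : ∀ w : G, a * (b * (a * (w))) = b * (c * (w)) := fun w => by
    conv_lhs => rw [← R30 (w)]; rw [← R188 (a⁻¹ * (w))]; rw [R0 (w)]
  have R192 : ∀ w : G, a⁻¹ * (b * (c * (w))) = b * (a * (w)) := fun w => by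
    conv_lhs => rw [← R191 (w)]; rw [R1 (b * (a * (w)))]
  have R197 : ∀ w : G, a⁻¹ * (a⁻¹ * (c * (w))) = a * (w) := fun w => by
    conv_lhs => rw [← R14 (c * (w))]; rw [R192 (w)]; rw [R3 (a * (w))]
  have R198 : ∀ w : G, a * (c⁻¹ * (w)) = a⁻¹ * (a⁻¹ * (w)) := fun w => by
    conv_lhs => rw [← R197 (c⁻¹ * (w))]; rw [R4 (w)]
  have R199 : ∀ w : G, a⁻¹ * (a⁻¹ * (a⁻¹ * (w))) = c⁻¹ * (w) := fun w => by
    conv_lhs => rw [← R198 (w)]; rw [R1 (c⁻¹ * (w))]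
  have R202 : ∀ w : G, c⁻¹ * (a⁻¹ * (w)) = a⁻¹ * (c⁻¹ * (w)) := fun w => by
    conv_lhs => rw [← R199 (a⁻¹ * (w))]; rw [R199 (w)]
  have R203 : ∀ w : G, c⁻¹ * (c⁻¹ * (w)) = c⁻¹ * (w) := fun w => by
    conv_lhs => rw [← R23 (w)]; rw [← R202 (a * (w))]; rw [R1 (w)]
  have R205 : ∀ w : G, c⁻¹ * (w) = w := fun w => by
    conv_lhs => rw [← R5 (w)]; rw [R203 (c * (w))]; rw [R5 (w)]
  have R206 : ∀ w : G, c * (w) = w := fun w => by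
    conv_lhs => rw [← R205 (c * (w))]; rw [R5 (w)]
  have R207 : ∀ w : G, a⁻¹ * (a⁻¹ * (w)) = a * (w) := fun w => by
    conv_lhs => rw [← R198 (w)]; rw [R205 (w)]
  have R208 : ∀ w : G, a * (b⁻¹ * (w)) = b⁻¹ * (a⁻¹ * (w)) := fun w => by
    conv_lhs => rw [← R207 (b⁻¹ * (w))]; rw [R13 (w)]
  have R213 : ∀ w : G, b⁻¹ * (b⁻¹ * (w)) = b⁻¹ * (w) := fun w => by
    conv_lhs => rw [← R205 (w)]; rw [R18 (w)]; rw [R205 (b⁻¹ * (w))]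
  have R214 : ∀ w : G, b⁻¹ * (w) = w := fun w => by
    conv_lhs => rw [← R3 (w)]; rw [R213 (b * (w))]; rw [R3 (w)]
  have R215 : ∀ w : G, b * (w) = w := fun w => by
    conv_lhs => rw [← R214 (b * (w))]; rw [R3 (w)]
  have R216 : ∀ w : G, a * (w) = a⁻¹ * (w) := fun w => by
    conv_lhs => rw [← R214 (w)]; rw [R208 (w)]; rw [R214 (a⁻¹ * (w))]
  have R217 : ∀ w : G, a⁻¹ * (w) = w := fun w => by
    conv_lhs => rw [← R216 (w)]; rw [← R207 (w)]; rw [← R216 (w)]; rw [R1 (w)]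
  have ha : a = 1 := by have := R217 1; simpa using (inv_eq_one.mp (by simpa using this))
  have hb : b = 1 := by have := R215 1; simpa using this
  have hc : c = 1 := by have := R206 1; simpa using this
  exact ⟨ha, hb, hc⟩


namespace CollatzWork

abbrev P := PresentedGroup (Prels collatz)

lemma prel (i : ℕ+) :
    (PresentedGroup.of (collatz i) : P)⁻¹ * .of i * .of (collatz i) = (.of i) ^ 2 := by
  have hmem : (FreeGroup.of (collatz i))⁻¹ * FreeGroup.of i * FreeGroup.of (collatz i) *
      (FreeGroup.of i ^ 2)⁻¹ ∈ Subgroup.normalClosure (Prels collatz) :=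
    Subgroup.subset_normalClosure ⟨i, rfl⟩
  have h1 : (PresentedGroup.mk (Prels collatz)) ((FreeGroup.of (collatz i))⁻¹ * FreeGroup.of i *
      FreeGroup.of (collatz i) * (FreeGroup.of i ^ 2)⁻¹) = 1 :=
    (QuotientGroup.eq_one_iff _).mpr hmem
  simp only [map_mul, map_inv, map_pow] at h1
  exact mul_inv_eq_one.mp h1

lemma c1 : collatz 1 = 4 := by decide
lemma c4 : collatz 4 = 2 := by decide
lemma c2 : collatz 2 = 1 := by decide

lemma of_one_eq_one : (PresentedGroup.of 1 : P) = 1 := by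
  have r1 := prel 1; rw [c1, pow_two] at r1
  have r4 := prel 4; rw [c4, pow_two] at r4
  have r2 := prel 2; rw [c2, pow_two] at r2
  exact (higman3 r1 r4 r2).1

lemma of_eq_one_of_reaches : ∀ (n : ℕ) (i : ℕ+), collatz^[n] i = 1 →
    (PresentedGroup.of i : P) = 1 := by
  intro n
  induction n with
  | zero => intro i h; simp only [Function.iterate_zero, id] at h; rw [h]; exact of_one_eq_one
  | succ n ih =>
    intro i h
    rw [Function.iterate_succ_apply] at h
    have h2 := ih _ h
    have h3 := prel i
    rw [h2] at h3
    simp only [inv_one, one_mul, mul_one, pow_two] at h3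
    exact right_eq_mul.mp h3

lemma easy (hc : ∀ i : ℕ+, ∃ n, collatz^[n] i = 1) : ∀ g : P, g = 1 := by
  intro g
  have : g ∈ (⊥ : Subgroup P) := by
    refine PresentedGroup.generated_by _ ⊥ (fun j => ?_) g
    obtain ⟨n, hn⟩ := hc j
    simpa [Subgroup.mem_bot] using of_eq_one_of_reaches n j hn
  simpa [Subgroup.mem_bot] using this



def bsRels : Set (FreeGroup Bool) :=
  {(FreeGroup.of true)⁻¹ * FreeGroup.of false * FreeGroup.of true * (FreeGroup.of false ^ 2)⁻¹}

abbrev BS := PresentedGroup bsRels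
def bsA : BS := PresentedGroup.of false
def bsT : BS := PresentedGroup.of true

lemma bs_rel : bsT⁻¹ * bsA * bsT = bsA ^ 2 := by
  have hmem : (FreeGroup.of true)⁻¹ * FreeGroup.of false * FreeGroup.of true *
      (FreeGroup.of false ^ 2)⁻¹ ∈ Subgroup.normalClosure bsRels :=
    Subgroup.subset_normalClosure rfl
  have h1 : (PresentedGroup.mk bsRels) ((FreeGroup.of true)⁻¹ * FreeGroup.of false *
      FreeGroup.of true * (FreeGroup.of false ^ 2)⁻¹) = 1 :=
    (QuotientGroup.eq_one_iff _).mpr hmem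
  simp only [map_mul, map_inv, map_pow] at h1
  exact mul_inv_eq_one.mp h1

def permA : Equiv.Perm ℚ := Equiv.addRight (1 : ℚ)
def permT : Equiv.Perm ℚ := Equiv.mulRight₀ ((2 : ℚ)⁻¹) (by norm_num)

lemma permA_apply' (q : ℚ) : permA q = q + 1 := rfl

lemma perm_rel : permT⁻¹ * permA * permT = permA ^ 2 := by
  ext q
  rw [pow_two, Equiv.Perm.mul_apply, Equiv.Perm.mul_apply, Equiv.Perm.mul_apply]
  show permT⁻¹ ((permT q) + 1) = (q + 1) + 1
  show (Equiv.mulRight₀ _ _).symm ((q * 2⁻¹) + 1) = (q + 1) + 1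
  rw [Equiv.mulRight₀_symm_apply]
  norm_num
  ring

noncomputable def bsρ : BS →* Equiv.Perm ℚ :=
  PresentedGroup.toGroup (f := fun b => if b then permT else permA)
    (by
      intro r hr
      rw [bsRels] at hr
      simp only [Set.mem_singleton_iff] at hr
      subst hr
      simp only [map_mul, map_inv, map_pow, FreeGroup.lift_apply_of, if_true, if_false]
      exact mul_inv_eq_one.mpr perm_rel)

@[simp] lemma bsρ_A : bsρ bsA = permA := PresentedGroup.toGroup.of _
@[simp] lemma bsρ_T : bsρ bsT = permT := PresentedGroup.toGroup.of _

lemma permA_apply (q : ℚ) : permA q = q + 1 := rfl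
lemma permA_inv_apply (q : ℚ) : permA⁻¹ q = q - 1 := by
  show (Equiv.addRight (1:ℚ)).symm q = q - 1
  simp
  ring
lemma permT_apply (q : ℚ) : permT q = q * 2⁻¹ := rfl
lemma permT_inv_apply (q : ℚ) : permT⁻¹ q = q * 2 := by
  show (Equiv.mulRight₀ _ _).symm q = q * 2
  rw [Equiv.mulRight₀_symm_apply]
  norm_num

lemma permA_zpow (m : ℤ) : ∀ q : ℚ, (permA ^ m) q = q + m := by
  induction m using Int.induction_on with
  | zero => intro q; simp
  | succ n ih =>
    intro q
    rw [zpow_add_one, Equiv.Perm.mul_apply, permA_apply, ih]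
    push_cast; ring
  | pred n ih =>
    intro q
    rw [zpow_sub_one, Equiv.Perm.mul_apply, permA_inv_apply, ih]
    push_cast; ring

lemma permT_zpow (j : ℤ) : ∀ q : ℚ, (permT ^ j) q = q * ((2:ℚ)⁻¹) ^ j := by
  induction j using Int.induction_on with
  | zero => intro q; simp
  | succ n ih =>
    intro q
    rw [zpow_add_one, Equiv.Perm.mul_apply, permT_apply, ih]
    rw [show ((n:ℤ)+1) = (n:ℤ)+1 from rfl, zpow_add_one₀ (by norm_num : ((2:ℚ)⁻¹) ≠ 0)]
    ring
  | pred n ih =>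
    intro q
    rw [zpow_sub_one, Equiv.Perm.mul_apply, permT_inv_apply, ih,
      zpow_sub_one₀ (by norm_num : ((2:ℚ)⁻¹) ≠ 0)]
    field_simp

lemma bs_pow_eq (m j : ℤ) (h : bsA ^ m = bsT ^ j) : m = 0 ∧ j = 0 := by
  have h2 := congrArg bsρ h
  simp only [map_zpow, bsρ_A, bsρ_T] at h2
  have h0 := congrArg (fun e : Equiv.Perm ℚ => e 0) h2
  simp only [permA_zpow, permT_zpow] at h0
  norm_num at h0
  subst h0
  have h1 := congrArg (fun e : Equiv.Perm ℚ => e 1) h2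
  simp only [permA_zpow, permT_zpow] at h1
  norm_num at h1
  refine ⟨rfl, ?_⟩
  have h2 : ((2:ℚ)⁻¹) ^ j = 1 := by
    rw [show ((2:ℚ)⁻¹) = 1/2 by norm_num]
    exact h1.symm
  exact (zpow_eq_one_iff_right₀ (by norm_num : (0:ℚ) ≤ 2⁻¹) (by norm_num)).mp h2

lemma bsA_zpow_eq_one {m : ℤ} (h : bsA ^ m = 1) : m = 0 :=
  (bs_pow_eq m 0 (by simpa using h)).1

lemma bsT_zpow_eq_one {j : ℤ} (h : bsT ^ j = 1) : j = 0 :=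
  (bs_pow_eq 0 j (by simpa using h.symm)).2



/-! ### FreeGroup Unit and exponent sum helpers -/

def expUnit : FreeGroup Unit →* Multiplicative ℤ :=
  FreeGroup.lift (fun _ => Multiplicative.ofAdd 1)

lemma unit_eq_pow (u : FreeGroup Unit) :
    u = FreeGroup.of () ^ (Multiplicative.toAdd (expUnit u)) := by
  induction u using FreeGroup.induction_on with
  | C1 => simp
  | of x =>
    simp [expUnit]
  | inv_of x ih => rw [map_inv]; simp only [toAdd_inv, zpow_neg]; rw [← ih]
  | mul x y ihx ihy =>
    rw [map_mul]
    simp only [toAdd_mul, zpow_add]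
    rw [← ihx, ← ihy]

lemma unitLift_eq {G : Type*} [Group G] (g : G) (u : FreeGroup Unit) :
    FreeGroup.lift (fun _ => g) u = g ^ (Multiplicative.toAdd (expUnit u)) := by
  conv_lhs => rw [unit_eq_pow u]
  simp

lemma mem_range_unitLift {G : Type*} [Group G] {g : G} {y : G} :
    y ∈ (FreeGroup.lift (fun _ : Unit => g)).range ↔ ∃ j : ℤ, y = g ^ j := by
  constructor
  · rintro ⟨u, rfl⟩
    exact ⟨Multiplicative.toAdd (expUnit u), unitLift_eq g u⟩
  · rintro ⟨j, rfl⟩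
    exact ⟨FreeGroup.of () ^ j, by simp⟩

lemma unitLift_injective {G : Type*} [Group G] {g : G}
    (hg : ∀ j : ℤ, g ^ j = 1 → j = 0) :
    Function.Injective (FreeGroup.lift (fun _ : Unit => g)) := by
  rw [injective_iff_map_eq_one]
  intro u hu
  rw [unitLift_eq] at hu
  have := hg _ hu
  rw [unit_eq_pow u, this, zpow_zero]

def expT : FreeGroup Bool →* Multiplicative ℤ :=
  FreeGroup.lift (fun c => cond c (Multiplicative.ofAdd 1) 1)

def expF : FreeGroup Bool →* Multiplicative ℤ :=
  FreeGroup.lift (fun c => cond c 1 (Multiplicative.ofAdd 1))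

@[simp] lemma expT_true : expT (FreeGroup.of true) = Multiplicative.ofAdd 1 := by
  simp [expT]

@[simp] lemma expT_false : expT (FreeGroup.of false) = 1 := by simp [expF, expT]

@[simp] lemma expF_true : expF (FreeGroup.of true) = 1 := by simp [expF]

@[simp] lemma expF_false : expF (FreeGroup.of false) = Multiplicative.ofAdd 1 := by
  simp [expF]

lemma I1_of_free {A : Type*} [Group A] {g0 gN : A}
    (free : ∀ x : FreeGroup Bool,
      (FreeGroup.lift (fun b => if b then gN else g0)) x = 1 → x = 1) :
    ∀ m j : ℤ, g0 ^ m = gN ^ j → m = 0 ∧ j = 0 := by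
  intro m j h
  set x : FreeGroup Bool := FreeGroup.of false ^ m * (FreeGroup.of true) ^ (-j) with hx
  have hlift : (FreeGroup.lift (fun b => if b then gN else g0)) x = 1 := by
    rw [hx]
    simp only [map_mul, map_zpow, FreeGroup.lift_apply_of]
    simp only [if_true, Bool.false_eq_true, if_false]
    rw [h, zpow_neg, mul_inv_cancel]
  have hx1 := free x hlift
  constructor
  · have h3 := congrArg expF hx1
    rw [hx] at h3
    simp only [map_mul, map_zpow, expF_true, expF_false, map_one, one_zpow, mul_one] at h3
    have h4 := congrArg Multiplicative.toAdd h3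
    simpa using h4
  · have h3 := congrArg expT hx1
    rw [hx] at h3
    simp only [map_mul, map_zpow, expT_true, expT_false, map_one, one_zpow, one_mul] at h3
    have h4 := congrArg Multiplicative.toAdd h3
    simp at h4
    omega

lemma lastord_of_free {A : Type*} [Group A] {g0 gN : A}
    (free : ∀ x : FreeGroup Bool,
      (FreeGroup.lift (fun b => if b then gN else g0)) x = 1 → x = 1) :
    ∀ j : ℤ, gN ^ j = 1 → j = 0 := by
  intro j h
  set x : FreeGroup Bool := (FreeGroup.of true) ^ j with hx
  have hlift : (FreeGroup.lift (fun b => if b then gN else g0)) x = 1 := by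
    rw [hx]; simp only [map_zpow, FreeGroup.lift_apply_of, if_true]; exact h
  have hx1 := free x hlift
  have h3 := congrArg expT hx1
  rw [hx] at h3
  simp only [map_zpow, expT_true, map_one] at h3
  have h4 := congrArg Multiplicative.toAdd h3
  simpa using h4



open Monoid

structure ArcLike (N : ℕ) : Type 1 where
  A : Type
  grp : Group A
  g : ℕ → A
  rel : ∀ i, i < N → (g (i+1))⁻¹ * g i * g (i+1) = (g i) ^ 2
  I1 : ∀ m j : ℤ, g 0 ^ m = g N ^ j → m = 0 ∧ j = 0
  lastord : ∀ j : ℤ, g N ^ j = 1 → j = 0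

attribute [instance] ArcLike.grp

structure ArcFree (N : ℕ) extends ArcLike N where
  free : ∀ x : FreeGroup Bool,
    (FreeGroup.lift (fun b => if b then g N else g 0)) x = 1 → x = 1

variable {N : ℕ}

def stepFam (S : ArcLike N) : Bool → Type := fun b => match b with
  | true => BS
  | false => S.A

noncomputable instance stepFamGroup (S : ArcLike N) : ∀ b, Group (stepFam S b) := fun b =>
  match b with
  | true => inferInstanceAs (Group BS)
  | false => S.grp

noncomputable def stepφ (S : ArcLike N) : ∀ b, FreeGroup Unit →* stepFam S b := fun b =>
  match b with
  | true => FreeGroup.lift (fun _ => bsA)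
  | false => FreeGroup.lift (fun _ => S.g N)

lemma stepφ_inj (S : ArcLike N) : ∀ b, Function.Injective (stepφ S b) := by
  intro b
  cases b
  · exact unitLift_injective (fun j hj => S.lastord j hj)
  · exact unitLift_injective (fun j hj => bsA_zpow_eq_one hj)

abbrev StepP (S : ArcLike N) := PushoutI (stepφ S)

noncomputable def stepG (S : ArcLike N) (i : ℕ) : StepP S :=
  if i = N + 1 then PushoutI.of (φ := stepφ S) true bsT
  else PushoutI.of (φ := stepφ S) false (S.g i)

lemma stepG_of_ne (S : ArcLike N) {i : ℕ} (h : i ≠ N + 1) :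
    stepG S i = PushoutI.of (φ := stepφ S) false (S.g i) := by
  unfold stepG; rw [if_neg h]

lemma stepG_last (S : ArcLike N) :
    stepG S (N+1) = PushoutI.of (φ := stepφ S) true bsT := by
  unfold stepG; rw [if_pos rfl]

lemma step_bridge (S : ArcLike N) :
    PushoutI.of (φ := stepφ S) false (S.g N) = PushoutI.of (φ := stepφ S) true bsA := by
  have h1 : S.g N = stepφ S false (FreeGroup.of ()) := by simp [stepφ]; exact (FreeGroup.lift_apply_of (f := fun _ : Unit => S.g N)).symm
  have h2 : bsA = stepφ S true (FreeGroup.of ()) := by simp [stepφ]; exact (FreeGroup.lift_apply_of (f := fun _ : Unit => bsA)).symm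
  rw [h1, h2, PushoutI.of_apply_eq_base, PushoutI.of_apply_eq_base]

lemma step_rel (S : ArcLike N) : ∀ i, i < N + 1 →
    (stepG S (i+1))⁻¹ * stepG S i * stepG S (i+1) = (stepG S i) ^ 2 := by
  intro i hi
  rcases Nat.lt_or_ge i N with h | h
  · have e1 : stepG S i = PushoutI.of (φ := stepφ S) false (S.g i) := if_neg (by omega)
    have e2 : stepG S (i+1) = PushoutI.of (φ := stepφ S) false (S.g (i+1)) := if_neg (by omega)
    rw [e1, e2]
    let ψ : S.A →* StepP S := PushoutI.of (φ := stepφ S) false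
    have := congrArg ψ (S.rel i h)
    simp only [map_mul, map_inv, map_pow] at this
    exact this
  · have hiN : i = N := by omega
    subst hiN
    rw [stepG_last S, stepG_of_ne S (show i ≠ i + 1 by omega), step_bridge]
    let ψ : BS →* StepP S := PushoutI.of (φ := stepφ S) true
    have := congrArg ψ bs_rel
    simp only [map_mul, map_inv, map_pow] at this
    exact this

noncomputable def stepF (S : ArcLike N) : ∀ b, FreeGroup Unit →* stepFam S b := fun b =>
  match b with
  | true => FreeGroup.lift (fun _ => bsT)
  | false => FreeGroup.lift (fun _ => S.g 0)

lemma step_free (S : ArcLike N) :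
    ∀ x : FreeGroup Bool,
      (FreeGroup.lift (fun b => if b then stepG S (N+1) else stepG S 0)) x = 1 → x = 1 := by
  classical
  intro x hx
  set χ : CoprodI (fun _ : Bool => FreeGroup Unit) →* StepP S :=
    CoprodI.lift (fun b => (PushoutI.of (φ := stepφ S) b).comp (stepF S b)) with hχ
  have key : (FreeGroup.lift (fun b => if b then stepG S (N+1) else stepG S 0)) =
      χ.comp (freeGroupEquivCoprodI (ι := Bool)).toMonoidHom := by
    ext b
    simp only [MonoidHom.comp_apply, MulEquiv.coe_toMonoidHom, FreeGroup.lift_apply_of,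
      freeGroupEquivCoprodI_apply, hχ, CoprodI.lift_of]
    cases b
    · rw [if_neg (by decide)]
      show stepG S 0 = PushoutI.of (φ := stepφ S) false (stepF S false (FreeGroup.of ()))
      have h5 : stepF S false (FreeGroup.of ()) = S.g 0 := by simp [stepF]; exact FreeGroup.lift_apply_of (f := fun _ : Unit => S.g 0)
      rw [h5, stepG_of_ne S (by omega)]
    · rw [if_pos rfl]
      show stepG S (N+1) = PushoutI.of (φ := stepφ S) true (stepF S true (FreeGroup.of ()))
      have h5 : stepF S true (FreeGroup.of ()) = bsT := by simp [stepF]; exact FreeGroup.lift_apply_of (f := fun _ : Unit => bsT)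
      rw [h5, stepG_last S]
  set y := freeGroupEquivCoprodI (ι := Bool) x with hy
  have hχy : χ y = 1 := by
    rw [key] at hx
    exact hx
  set w := CoprodI.Word.equiv (M := fun _ : Bool => FreeGroup Unit) y with hw
  have hyw : w.prod = y := CoprodI.Word.equiv.symm_apply_apply y
  have hm_ne : ∀ l ∈ w.toList, Multiplicative.toAdd (expUnit (Sigma.snd l)) ≠ 0 := by
    intro l hl h0
    have h1 : Sigma.snd l ≠ 1 := w.ne_one l hl
    apply h1
    rw [unit_eq_pow (Sigma.snd l), h0, zpow_zero]
  let mapLetter : (Σ _ : Bool, FreeGroup Unit) → (Σ b, stepFam S b) :=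
    fun l => ⟨l.1, stepF S l.1 l.2⟩
  have hletter_ne : ∀ l ∈ w.toList, stepF S l.1 l.2 ≠ 1 := by
    intro l hl
    obtain ⟨b, u⟩ := l
    have hm := hm_ne ⟨b, u⟩ hl
    cases b
    · show FreeGroup.lift (fun _ => S.g 0) u ≠ 1
      rw [unitLift_eq]
      intro hone
      exact hm (S.I1 _ 0 (by simpa using hone)).1
    · show FreeGroup.lift (fun _ => bsT) u ≠ 1
      rw [unitLift_eq]
      intro hone
      exact hm (bsT_zpow_eq_one hone)
  let w' : CoprodI.Word (stepFam S) :=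
    { toList := w.toList.map mapLetter
      ne_one := by
        intro l hl
        rw [List.mem_map] at hl
        obtain ⟨l0, hl0, rfl⟩ := hl
        exact hletter_ne l0 hl0
      chain_ne := by
        rw [List.isChain_map]
        exact w.chain_ne }
  have hred : PushoutI.Reduced (stepφ S) w' := by
    intro l hl
    rw [show w'.toList = w.toList.map mapLetter from rfl, List.mem_map] at hl
    obtain ⟨l0, hl0, rfl⟩ := hl
    obtain ⟨b, u⟩ := l0
    have hm := hm_ne ⟨b, u⟩ hl0
    cases b
    · show ¬ (stepF S false u ∈ (stepφ S false).range)
      show ¬ (FreeGroup.lift (fun _ => S.g 0) u ∈ (FreeGroup.lift (fun _ => S.g N)).range)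
      rw [unitLift_eq, mem_range_unitLift]
      rintro ⟨j, hj⟩
      exact hm (S.I1 _ j hj).1
    · show ¬ (FreeGroup.lift (fun _ => bsT) u ∈ (FreeGroup.lift (fun _ => bsA)).range)
      rw [unitLift_eq, mem_range_unitLift]
      rintro ⟨j, hj⟩
      exact hm (bs_pow_eq j (Multiplicative.toAdd (expUnit u)) hj.symm).2
  have hlistprod : ∀ L : List (Σ _ : Bool, FreeGroup Unit),
      PushoutI.ofCoprodI (((L.map mapLetter).map fun l => CoprodI.of (i := l.1) l.2).prod)
        = χ ((L.map fun l => CoprodI.of (M := fun _ : Bool => FreeGroup Unit) (i := l.1) l.2).prod) := by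
    intro L
    induction L with
    | nil => simp
    | cons a L ih =>
      simp only [List.map_cons, List.prod_cons, map_mul, ih]
      congr 1
  have hprod : PushoutI.ofCoprodI (w'.prod) = χ (w.prod) := hlistprod w.toList
  have h1mem : PushoutI.ofCoprodI (w'.prod) ∈ (PushoutI.base (stepφ S)).range := by
    rw [hprod, hyw, hχy]
    exact ⟨1, by simp⟩
  have hempty := PushoutI.Reduced.eq_empty_of_mem_range (stepφ_inj S) hred h1mem
  have hnil : w.toList = [] := by
    have h2 : w.toList.map mapLetter = [] := congrArg CoprodI.Word.toList hempty
    exact List.map_eq_nil_iff.mp h2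
  have hy1 : y = 1 := by
    rw [← hyw]
    show (w.toList.map fun l => CoprodI.of (M := fun _ : Bool => FreeGroup Unit) (i := l.fst) l.snd).prod = 1
    rw [hnil]
    simp
  rw [hy] at hy1
  have h8 := congrArg (freeGroupEquivCoprodI (ι := Bool)).symm hy1
  rwa [MulEquiv.symm_apply_apply, map_one] at h8

noncomputable def step (S : ArcLike N) : ArcFree (N+1) where
  A := StepP S
  grp := inferInstance
  g := stepG S
  rel := step_rel S
  I1 := I1_of_free (step_free S)
  lastord := lastord_of_free (step_free S)
  free := step_free S



noncomputable def preArc : ArcLike 1 where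
  A := BS
  grp := inferInstance
  g := fun i => if i = 0 then bsA else bsT
  rel := by
    intro i hi
    have h0 : i = 0 := by omega
    subst h0
    simp only [if_pos rfl, if_neg (by omega : ¬ (1:ℕ) = 0)]
    exact bs_rel
  I1 := by
    intro m j h
    simp only [if_pos rfl, if_neg (by omega : ¬ (1:ℕ) = 0)] at h
    exact bs_pow_eq m j h
  lastord := by
    intro j h
    simp only [if_neg (by omega : ¬ (1:ℕ) = 0)] at h
    exact bsT_zpow_eq_one h

noncomputable def arcTower : (k : ℕ) → ArcFree (k + 2)
  | 0 => step preArc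
  | (k+1) => step (arcTower k).toArcLike

section Glue

variable (m : ℕ)

def glueFam : Bool → Type := fun b => match b with
  | true => (arcTower 0).A
  | false => (arcTower m).A

noncomputable instance glueFamGroup : ∀ b, Group (glueFam m b) := fun b =>
  match b with
  | true => (arcTower 0).grp
  | false => (arcTower m).grp

noncomputable def glueφ : ∀ b, FreeGroup Bool →* glueFam m b := fun b =>
  match b with
  | true  => FreeGroup.lift (fun c => if c then (arcTower 0).g 2 else (arcTower 0).g 0)
  | false => FreeGroup.lift (fun c => if c then (arcTower m).g 0 else (arcTower m).g (m+2))

def swapHom : FreeGroup Bool →* FreeGroup Bool :=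
  FreeGroup.lift (fun c => FreeGroup.of (!c))

lemma swapHom_injective : Function.Injective swapHom := by
  have h : Function.LeftInverse swapHom swapHom := by
    intro x
    induction x using FreeGroup.induction_on with
    | C1 => simp
    | of b =>
      simp [swapHom]
    | inv_of b ih => simp only [map_inv]; rw [ih]
    | mul a b iha ihb => simp only [map_mul]; rw [iha, ihb]
  exact h.injective

lemma glueφ_inj : ∀ b, Function.Injective (glueφ m b) := by
  intro b
  cases b
  · -- false : lift (if c then g 0 else g (m+2))
    have hcomp : glueφ m false =
        (FreeGroup.lift (fun c => if c = true then (arcTower m).g (m+2) else (arcTower m).g 0)).comp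
          swapHom := by
      apply FreeGroup.ext_hom
      intro c
      cases c
      · show glueφ m false (FreeGroup.of false) =
          (FreeGroup.lift fun c => if c = true then (arcTower m).g (m + 2) else (arcTower m).g 0)
            (swapHom (FreeGroup.of false))
        rw [show swapHom (FreeGroup.of false) = FreeGroup.of true from by simp [swapHom]]
        simp [glueφ]; rfl
      · show glueφ m false (FreeGroup.of true) =
          (FreeGroup.lift fun c => if c = true then (arcTower m).g (m + 2) else (arcTower m).g 0)
            (swapHom (FreeGroup.of true))
        rw [show swapHom (FreeGroup.of true) = FreeGroup.of false from by simp [swapHom]]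
        simp [glueφ]; rfl
    rw [hcomp]
    have h1 : Function.Injective
        (FreeGroup.lift (fun c => if c = true then (arcTower m).g (m+2) else (arcTower m).g 0)) :=
      (injective_iff_map_eq_one _).mpr (arcTower m).free
    exact h1.comp swapHom_injective
  · -- true
    rw [show glueφ m true =
        FreeGroup.lift (fun c => if c then (arcTower 0).g 2 else (arcTower 0).g 0) from rfl]
    rw [injective_iff_map_eq_one]
    exact (arcTower 0).free

abbrev GlueQ := PushoutI (glueφ m)

noncomputable def glueU (j : ℕ) : GlueQ m :=
  if j ≤ 2 then PushoutI.of (φ := glueφ m) true ((arcTower 0).g j)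
  else PushoutI.of (φ := glueφ m) false ((arcTower m).g (j - 2))

lemma glue_bridgeA :
    PushoutI.of (φ := glueφ m) true ((arcTower 0).g 2)
      = PushoutI.of (φ := glueφ m) false ((arcTower m).g 0) := by
  have h1 : (arcTower 0).g 2 = glueφ m true (FreeGroup.of true) := by simp [glueφ]
  have h2 : (arcTower m).g 0 = glueφ m false (FreeGroup.of true) := by simp [glueφ]
  rw [h1, h2, PushoutI.of_apply_eq_base, PushoutI.of_apply_eq_base]

lemma glue_bridgeB :
    PushoutI.of (φ := glueφ m) true ((arcTower 0).g 0)
      = PushoutI.of (φ := glueφ m) false ((arcTower m).g (m+2)) := by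
  have h1 : (arcTower 0).g 0 = glueφ m true (FreeGroup.of false) := by simp [glueφ]
  have h2 : (arcTower m).g (m+2) = glueφ m false (FreeGroup.of false) := by simp [glueφ]
  rw [h1, h2, PushoutI.of_apply_eq_base, PushoutI.of_apply_eq_base]

lemma glueU_le2 {j : ℕ} (h : j ≤ 2) :
    glueU m j = PushoutI.of (φ := glueφ m) true ((arcTower 0).g j) := by
  unfold glueU; rw [if_pos h]

lemma glueU_gt2 {j : ℕ} (h : ¬ j ≤ 2) :
    glueU m j = PushoutI.of (φ := glueφ m) false ((arcTower m).g (j - 2)) := by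
  unfold glueU; rw [if_neg h]

lemma glue_urel : ∀ j, j < m + 4 →
    (glueU m ((j+1) % (m+4)))⁻¹ * glueU m j * glueU m ((j+1) % (m+4))
      = (glueU m j) ^ 2 := by
  intro j hj
  rcases Nat.lt_or_ge j 2 with h2 | h2
  · -- j = 0 or 1
    have hmod : (j+1) % (m+4) = j + 1 := Nat.mod_eq_of_lt (by omega)
    rw [hmod, glueU_le2 m (show j + 1 ≤ 2 by omega), glueU_le2 m (show j ≤ 2 by omega),
      ]
    let ψ : (arcTower 0).A →* GlueQ m := PushoutI.of (φ := glueφ m) true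
    have := congrArg ψ ((arcTower 0).rel j (by omega))
    simp only [map_mul, map_inv, map_pow] at this
    exact this
  · rcases Nat.eq_or_lt_of_le h2 with h2e | h2l
    · -- j = 2
      have hj2 : j = 2 := h2e.symm
      subst hj2
      have hmod : (2+1) % (m+4) = 3 := Nat.mod_eq_of_lt (by omega)
      rw [hmod, glueU_gt2 m (show ¬ (3:ℕ) ≤ 2 by omega), glueU_le2 m (show (2:ℕ) ≤ 2 by omega),
        glue_bridgeA]
      let ψ : (arcTower m).A →* GlueQ m := PushoutI.of (φ := glueφ m) false
      have := congrArg ψ ((arcTower m).rel 0 (by omega))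
      simp only [map_mul, map_inv, map_pow] at this
      exact this
    · rcases Nat.lt_or_ge j (m+3) with h3 | h3
      · -- 2 < j < m+3
        have hmod : (j+1) % (m+4) = j + 1 := Nat.mod_eq_of_lt (by omega)
        rw [hmod, glueU_gt2 m (show ¬ j + 1 ≤ 2 by omega), glueU_gt2 m (show ¬ j ≤ 2 by omega),
          ]
        have hidx : j + 1 - 2 = (j - 2) + 1 := by omega
        rw [hidx]
        let ψ : (arcTower m).A →* GlueQ m := PushoutI.of (φ := glueφ m) false
        have := congrArg ψ ((arcTower m).rel (j - 2) (by omega))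
        simp only [map_mul, map_inv, map_pow] at this
        exact this
      · -- j = m+3
        have hj3 : j = m + 3 := by omega
        subst hj3
        have hmod : (m+3+1) % (m+4) = 0 := by
          have : m+3+1 = m+4 := by omega
          rw [this, Nat.mod_self]
        rw [hmod, glueU_le2 m (show (0:ℕ) ≤ 2 by omega), glueU_gt2 m (show ¬ m + 3 ≤ 2 by omega),
          glue_bridgeB]
        have hidx : m + 3 - 2 = m + 1 := by omega
        rw [hidx]
        let ψ : (arcTower m).A →* GlueQ m := PushoutI.of (φ := glueφ m) false
        have := congrArg ψ ((arcTower m).rel (m+1) (by omega))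
        simp only [map_mul, map_inv, map_pow] at this
        exact this

lemma glueU_zero_ne_one : glueU m 0 ≠ 1 := by
  rw [glueU_le2 m (show (0:ℕ) ≤ 2 by omega)]
  intro h
  have hinj := PushoutI.of_injective (glueφ_inj m) true
  have h0 : (arcTower 0).g 0 = 1 := by
    apply hinj
    rw [h]
    exact (map_one (PushoutI.of (φ := glueφ m) true)).symm
  have := (I1_of_free (arcTower 0).free 1 0 (by simp [h0])).1
  norm_num at this

end Glue

theorem higman_tuple (N : ℕ) (hN : 4 ≤ N) :
    ∃ (G : Type) (_ : Group G) (t : ZMod N → G),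
      (∀ i : ZMod N, (t (i+1))⁻¹ * t i * t (i+1) = (t i)^2) ∧ t 0 ≠ 1 := by
  obtain ⟨m, rfl⟩ : ∃ m, N = m + 4 := ⟨N - 4, by omega⟩
  haveI : NeZero (m+4) := ⟨by omega⟩
  haveI : Fact (1 < m+4) := ⟨by omega⟩
  refine ⟨GlueQ m, inferInstance, fun i => glueU m i.val, ?_, ?_⟩
  · intro i
    have hval : (i + 1).val = (i.val + 1) % (m+4) := by
      rw [ZMod.val_add, ZMod.val_one]
    show (glueU m (i+1).val)⁻¹ * glueU m i.val * glueU m (i+1).val = (glueU m i.val)^2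
    rw [hval]
    exact glue_urel m i.val (ZMod.val_lt i)
  · show glueU m (0 : ZMod (m+4)).val ≠ 1
    rw [ZMod.val_zero]
    exact glueU_zero_ne_one m



lemma collatz_coe (x : ℕ+) :
    ((collatz x : ℕ+) : ℕ) = if Odd (x:ℕ) then 3*(x:ℕ)+1 else (x:ℕ)/2 := by
  by_cases h : Odd (x:ℕ)
  · rw [if_pos h, show collatz x = 3 * x + 1 from dif_pos h]; push_cast; ring
  · rw [if_neg h]; exact congrArg Subtype.val (show collatz x = _ from dif_neg h)

lemma cs (x : ℕ+) : (((collatz x : ℕ+):ℕ) = 3*(x:ℕ)+1 ∧ (x:ℕ)%2 = 1)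
    ∨ (((collatz x : ℕ+):ℕ) = (x:ℕ)/2 ∧ (x:ℕ)%2 = 0) := by
  by_cases h : Odd (x:ℕ)
  · exact Or.inl ⟨by rw [collatz_coe, if_pos h], Nat.odd_iff.mp h⟩
  · exact Or.inr ⟨by rw [collatz_coe, if_neg h],
      Nat.even_iff.mp (Nat.not_odd_iff_even.mp h)⟩

lemma no_small_cycle (c : ℕ+) (n : ℕ) (hn : n = 1 ∨ n = 2 ∨ n = 3)
    (hc : collatz^[n] c = c) : ∃ m, collatz^[m] c = 1 := by
  have hkey : (c:ℕ) = 1 ∨ (c:ℕ) = 2 ∨ (c:ℕ) = 4 := by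
    have hapos : 1 ≤ (c:ℕ) := c.one_le
    have hbpos : 1 ≤ ((collatz c : ℕ+):ℕ) := (collatz c).one_le
    have hdpos : 1 ≤ ((collatz (collatz c) : ℕ+):ℕ) := (collatz (collatz c)).one_le
    rcases hn with rfl | rfl | rfl
    · rw [Function.iterate_one] at hc
      have h0 := congrArg (fun z : ℕ+ => (z:ℕ)) hc
      rcases cs c with ⟨h1, h2⟩ | ⟨h1, h2⟩ <;> omega
    · have hit : collatz^[2] c = collatz (collatz c) := by
        rw [show (2:ℕ) = 1+1 from rfl, Function.iterate_succ_apply, Function.iterate_one]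
      rw [hit] at hc
      have h0 := congrArg (fun z : ℕ+ => (z:ℕ)) hc
      rcases cs c with ⟨h1, h2⟩ | ⟨h1, h2⟩ <;>
        rcases cs (collatz c) with ⟨h3, h4⟩ | ⟨h3, h4⟩ <;> omega
    · have hit : collatz^[3] c = collatz (collatz (collatz c)) := by
        rw [show (3:ℕ) = 1+1+1 from rfl, Function.iterate_succ_apply,
          Function.iterate_succ_apply, Function.iterate_one]
      rw [hit] at hc
      have h0 := congrArg (fun z : ℕ+ => (z:ℕ)) hc
      rcases cs c with ⟨h1, h2⟩ | ⟨h1, h2⟩ <;>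
        rcases cs (collatz c) with ⟨h3, h4⟩ | ⟨h3, h4⟩ <;>
          rcases cs (collatz (collatz c)) with ⟨h5, h6⟩ | ⟨h5, h6⟩ <;> omega
  rcases hkey with h | h | h
  · have hc1 : c = (1:ℕ+) := PNat.coe_injective (by simpa using h)
    exact ⟨0, by simp [hc1]⟩
  · have hc2 : c = (2:ℕ+) := PNat.coe_injective (by simpa using h)
    exact ⟨1, by rw [hc2, Function.iterate_one, c2]⟩
  · have hc4 : c = (4:ℕ+) := PNat.coe_injective (by simpa using h)
    exact ⟨2, by rw [hc4, show (2:ℕ) = 1+1 from rfl, Function.iterate_succ_apply, c4,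
      Function.iterate_one, c2]⟩


lemma build_gamma {G : Type} [Group G] {f : ℕ+ → ℕ+} (c : ℕ+) (n₀ : ℕ) (hpos : 0 < n₀)
    (hcyc : f^[n₀] c = c)
    (huniq : ∀ j j', j < n₀ → j' < n₀ → f^[j] c = f^[j'] c → j = j')
    (t : ZMod n₀ → G) (trel : ∀ i, (t (i+1))⁻¹ * t i * t (i+1) = t i ^ 2) :
    ∃ γ : ℕ+ → G, (∀ x, (γ (f x))⁻¹ * γ x * γ (f x) = (γ x)^2) ∧ γ c = t 0 := by
  classical
  refine ⟨fun x => if hx : ∃ j, j < n₀ ∧ f^[j] c = x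
    then t (((Nat.find hx : ℕ) : ZMod n₀)) else 1, ?_, ?_⟩
  · intro x
    dsimp only
    by_cases hx : ∃ j, j < n₀ ∧ f^[j] c = x
    · rw [dif_pos hx]
      obtain ⟨hjlt, hjc⟩ := Nat.find_spec hx
      set j := Nat.find hx with hj
      have hwit : f^[(j+1) % n₀] c = f x := by
        rcases Nat.lt_or_ge (j+1) n₀ with hh | hh
        · rw [Nat.mod_eq_of_lt hh, Function.iterate_succ_apply', hjc]
        · have hje : j + 1 = n₀ := by omega
          have hfx1 : f x = f^[j+1] c := by rw [Function.iterate_succ_apply', hjc]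
          rw [hje, Nat.mod_self, Function.iterate_zero, id_eq, hfx1, hje, hcyc]
      have hfx : ∃ j', j' < n₀ ∧ f^[j'] c = f x :=
        ⟨(j+1) % n₀, Nat.mod_lt _ hpos, hwit⟩
      rw [dif_pos hfx]
      have heq : Nat.find hfx = (j+1) % n₀ := by
        obtain ⟨hlt', hc'⟩ := Nat.find_spec hfx
        exact huniq _ _ hlt' (Nat.mod_lt _ hpos) (hc'.trans hwit.symm)
      rw [heq]
      have hcast : ((((j+1) % n₀ : ℕ)) : ZMod n₀) = ((j:ℕ) : ZMod n₀) + 1 := by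
        rw [ZMod.natCast_mod]
        push_cast
        ring
      rw [hcast]
      exact trel _
    · rw [dif_neg hx, mul_one, one_pow]
      exact inv_mul_cancel _
  · dsimp only
    have hxc : ∃ j, j < n₀ ∧ f^[j] c = c := ⟨0, hpos, rfl⟩
    rw [dif_pos hxc]
    have h0 : Nat.find hxc = 0 := by
      obtain ⟨hlt, hcc⟩ := Nat.find_spec hxc
      exact huniq _ _ hlt hpos hcc
    rw [h0]
    simp

lemma build_gamma_chain {G : Type} [Group G] {f : ℕ+ → ℕ+} (c : ℕ+)
    (hinj : ∀ j j', f^[j] c = f^[j'] c → j = j')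
    (t : ZMod 4 → G) (trel : ∀ i, (t (i+1))⁻¹ * t i * t (i+1) = t i ^ 2) :
    ∃ γ : ℕ+ → G, (∀ x, (γ (f x))⁻¹ * γ x * γ (f x) = (γ x)^2) ∧ γ c = t 0 := by
  classical
  refine ⟨fun x => if hx : ∃ j, f^[j] c = x
    then t (((Nat.find hx : ℕ) : ZMod 4)) else 1, ?_, ?_⟩
  · intro x
    dsimp only
    by_cases hx : ∃ j, f^[j] c = x
    · rw [dif_pos hx]
      have hjc := Nat.find_spec hx
      set j := Nat.find hx with hj
      have hwit : f^[j+1] c = f x := by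
        rw [Function.iterate_succ_apply', hjc]
      have hfx : ∃ j', f^[j'] c = f x := ⟨j+1, hwit⟩
      rw [dif_pos hfx]
      have heq : Nat.find hfx = j + 1 :=
        hinj _ _ ((Nat.find_spec hfx).trans hwit.symm)
      rw [heq]
      push_cast
      exact trel _
    · rw [dif_neg hx, mul_one, one_pow]
      exact inv_mul_cancel _
  · dsimp only
    have hxc : ∃ j, f^[j] c = c := ⟨0, rfl⟩
    rw [dif_pos hxc]
    have h0 : Nat.find hxc = 0 := hinj _ _ (Nat.find_spec hxc)
    rw [h0]
    simp

theorem hard (h : ∀ g : P, g = 1) : ∀ i : ℕ+, ∃ n, collatz^[n] i = 1 := by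
  by_contra hcon
  push_neg at hcon
  obtain ⟨i₀, hi₀⟩ := hcon
  have main : ∃ (G : Type) (_ : Group G) (γ : ℕ+ → G),
      (∀ x, (γ (collatz x))⁻¹ * γ x * γ (collatz x) = (γ x)^2) ∧ ∃ j₀, γ j₀ ≠ 1 := by
    classical
    by_cases hper : ∃ k n, 0 < n ∧ collatz^[n] (collatz^[k] i₀) = collatz^[k] i₀
    · obtain ⟨k, n, hn, hcyc0⟩ := hper
      set c := collatz^[k] i₀ with hcdef
      have horb : ∀ m, collatz^[m] c ≠ 1 := by
        intro m hm
        apply hi₀ (m + k)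
        rw [Function.iterate_add_apply]
        exact hm
      have hex : ∃ n, 0 < n ∧ collatz^[n] c = c := ⟨n, hn, hcyc0⟩
      set n₀ := Nat.find hex with hn₀
      obtain ⟨hn₀pos, hn₀cyc⟩ := Nat.find_spec hex
      have hmin : ∀ d, 0 < d → d < n₀ → collatz^[d] c ≠ c := by
        intro d hd hdn hdc
        exact Nat.find_min hex hdn ⟨hd, hdc⟩
      have hn₀4 : 4 ≤ n₀ := by
        by_contra h4
        push_neg at h4
        have hsm : n₀ = 1 ∨ n₀ = 2 ∨ n₀ = 3 := by omega
        obtain ⟨mm, hmm⟩ := no_small_cycle c n₀ hsm hn₀cyc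
        exact horb mm hmm
      have huniq : ∀ j j', j < n₀ → j' < n₀ → collatz^[j] c = collatz^[j'] c → j = j' := by
        intro j j' hj hj' he
        by_contra hne
        wlog hlt : j < j' generalizing j j'
        · exact this j' j hj' hj he.symm (Ne.symm hne) (by omega)
        have h2 : collatz^[n₀ - j' + j] c = c := by
          rw [Function.iterate_add_apply, he, ← Function.iterate_add_apply,
            (show n₀ - j' + j' = n₀ by omega), hn₀cyc]
        exact hmin _ (by omega) (by omega) h2
      obtain ⟨G, instG, t, trel, tne⟩ := higman_tuple n₀ hn₀4
      obtain ⟨γ, hγrel, hγc⟩ := build_gamma (G := G) c n₀ (by omega) hn₀cyc huniq t trel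
      exact ⟨G, instG, γ, hγrel, ⟨c, by rw [hγc]; exact tne⟩⟩
    · push_neg at hper
      have hinj : ∀ j j', collatz^[j] i₀ = collatz^[j'] i₀ → j = j' := by
        intro j j' he
        by_contra hne
        wlog hlt : j < j' generalizing j j'
        · exact this j' j he.symm (Ne.symm hne) (by omega)
        have := hper j (j' - j) (by omega)
        apply this
        rw [← Function.iterate_add_apply, (show j' - j + j = j' by omega)]
        exact he.symm
      obtain ⟨G, instG, t, trel, tne⟩ := higman_tuple 4 (by norm_num)
      obtain ⟨γ, hγrel, hγc⟩ := build_gamma_chain (G := G) i₀ hinj t trel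
      exact ⟨G, instG, γ, hγrel, ⟨i₀, by rw [hγc]; exact tne⟩⟩
  obtain ⟨G, instG, γ, hγrel, j₀, hj₀⟩ := main
  have hker : ∀ r ∈ Prels collatz, FreeGroup.lift γ r = 1 := by
    rintro r ⟨i, rfl⟩
    simp only [map_mul, map_inv, map_pow, FreeGroup.lift_apply_of]
    exact mul_inv_eq_one.mpr (hγrel i)
  have hone := congrArg (PresentedGroup.toGroup hker) (h (PresentedGroup.of j₀))
  rw [PresentedGroup.toGroup.of, map_one] at hone
  exact hj₀ hone



end CollatzWork

theorem stmt_2 :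
    (∀ g : PresentedGroup (Prels collatz), g = 1) ↔
      ∀ i : ℕ+, ∃ n : ℕ, collatz^[n] i = 1 := by
  constructor
  · exact CollatzWork.hard
  · exact CollatzWork.easy
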